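/- Let G be a 2-connected cubic planar graph, let e = (u,v) and e' = (x,y) be two edges of G, and let G' be obtained from G by the following augmentation: remove e and e'; add new vertices u', v', a1, a2, a3, b1, b2, b3, x', x'', y', y''; and add edges so that the resulting gadget connects u, v, x, y as in the gadget of Lemma 3 (u–u', v–v', u'–v' absent, with u', v' each adjacent to a1 and b1 appropriately, a1–a2–a3 and b1–b2–b3 structure, x–x'–x''–y and x–y'–y''–y paths, with a2, a3 adjacent to x', x'' and b2, b3 adjacent to y', y'' as in the figure). Then α(G') = α(G) + 5. -/

import Mathlib

open Sum

/-- A set of vertices is independent if its vertices are pairwise non-adjacent. -/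
def SimpleGraph.IsIndepVertexSet {V : Type*} (G : SimpleGraph V) (I : Set V) : Prop :=
  I.Pairwise fun a b => ¬ G.Adj a b

/-- The independence number `α G`. -/
noncomputable def SimpleGraph.indepNum' {V : Type*} (G : SimpleGraph V) : ℕ :=
  sSup {n | ∃ s : Finset V, G.IsIndepVertexSet ↑s ∧ s.card = n}

/-- `G` is 2-connected: at least 3 vertices, connected, and no cutvertex. -/
def SimpleGraph.TwoConnected {V : Type*} [Fintype V] (G : SimpleGraph V) : Prop :=
  3 ≤ Fintype.card V ∧ G.Connected ∧
    ∀ a : V, (((⊤ : G.Subgraph).deleteVerts {a}).coe.Connected)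

/-- The internal edges of the MIS gadget of Fig. 3(a), on the 12 new vertices
`0 = u', 1 = v', 2 = a₁, 3 = a₂, 4 = a₃, 5 = b₁, 6 = b₂, 7 = b₃,
8 = x', 9 = x'', 10 = y', 11 = y''`: the edge `u'v'`, edges `u'b₁`, `v'a₁`,
triangles `a₁a₂a₃` and `b₁b₂b₃`, edges `a₂y''`, `a₃x'`, `b₂y'`, `b₃x''`,
and edges `x'y''`, `x''y'`, `x''y''`. -/
def misGadgetAdj (i j : Fin 12) : Prop :=
  ((i, j) : Fin 12 × Fin 12) ∈
    ({(0,1), (0,5), (1,2), (2,3), (2,4), (3,4), (5,6), (5,7), (6,7),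
      (3,11), (4,8), (6,10), (7,9), (8,11), (9,10), (9,11)} : Set (Fin 12 × Fin 12))

/-! ### Auxiliary lemmas -/

namespace MisAux

lemma misGadgetAdj_iff (i j : Fin 12) : misGadgetAdj i j ↔ (i, j) ∈
    ([(0,1), (0,5), (1,2), (2,3), (2,4), (3,4), (5,6), (5,7), (6,7),
      (3,11), (4,8), (6,10), (7,9), (8,11), (9,10), (9,11)] : List (Fin 12 × Fin 12)) := by
  simp [misGadgetAdj]

instance : DecidableRel misGadgetAdj := fun i j =>
  decidable_of_iff _ (misGadgetAdj_iff i j).symm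

/-- symmetrized gadget adjacency -/
def mA (i j : Fin 12) : Prop := misGadgetAdj i j ∨ misGadgetAdj j i

instance : DecidableRel mA := fun _ _ => instDecidableOr

variable {W : Type*} [Fintype W] (H : SimpleGraph W)

lemma indep_bddAbove :
    BddAbove {n | ∃ s : Finset W, H.IsIndepVertexSet ↑s ∧ s.card = n} :=
  ⟨Fintype.card W, by rintro n ⟨s, -, rfl⟩; exact s.card_le_univ⟩

lemma indep_nonempty :
    Set.Nonempty {n | ∃ s : Finset W, H.IsIndepVertexSet ↑s ∧ s.card = n} :=
  ⟨0, ∅, by simp [SimpleGraph.IsIndepVertexSet], by simp⟩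

lemma exists_indepNum :
    ∃ s : Finset W, H.IsIndepVertexSet ↑s ∧ s.card = H.indepNum' :=
  Nat.sSup_mem (indep_nonempty H) (indep_bddAbove H)

lemma card_le_indepNum {s : Finset W} (h : H.IsIndepVertexSet ↑s) :
    s.card ≤ H.indepNum' :=
  le_csSup (indep_bddAbove H) ⟨s, h, rfl⟩

/-- intersection of an independent set with a clique has at most one element -/
lemma inter_clique_le_one (B C : Finset (Fin 12))
    (hB : ∀ i ∈ B, ∀ j ∈ B, i ≠ j → ¬ mA i j)
    (hC : ∀ a ∈ C, ∀ b ∈ C, a ≠ b → mA a b) : (B ∩ C).card ≤ 1 := by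
  rw [Finset.card_le_one]
  intro a ha b hb
  rw [Finset.mem_inter] at ha hb
  by_contra hne
  exact hB a ha.1 b hb.1 hne (hC a ha.2 b hb.2 hne)

lemma cover_bound (B C1 C2 C3 C4 C5 : Finset (Fin 12))
    (hcov : ∀ a ∈ B, a ∈ C1 ∨ a ∈ C2 ∨ a ∈ C3 ∨ a ∈ C4 ∨ a ∈ C5) :
    B.card ≤ (B ∩ C1).card + (B ∩ C2).card + (B ∩ C3).card +
      (B ∩ C4).card + (B ∩ C5).card := by
  have hsub : B ⊆ (B ∩ C1) ∪ (B ∩ C2) ∪ (B ∩ C3) ∪ (B ∩ C4) ∪ (B ∩ C5) := by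
    intro a ha
    simp only [Finset.mem_union, Finset.mem_inter]
    rcases hcov a ha with h | h | h | h | h <;> tauto
  refine (Finset.card_le_card hsub).trans ?_
  have h1 := Finset.card_union_le ((B ∩ C1) ∪ (B ∩ C2) ∪ (B ∩ C3) ∪ (B ∩ C4)) (B ∩ C5)
  have h2 := Finset.card_union_le ((B ∩ C1) ∪ (B ∩ C2) ∪ (B ∩ C3)) (B ∩ C4)
  have h3 := Finset.card_union_le ((B ∩ C1) ∪ (B ∩ C2)) (B ∩ C3)
  have h4 := Finset.card_union_le (B ∩ C1) (B ∩ C2)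
  omega

section bounds
variable (B : Finset (Fin 12)) (hB : ∀ i ∈ B, ∀ j ∈ B, i ≠ j → ¬ mA i j)

include hB

lemma gadget_le_5 : B.card ≤ 5 := by
  have hcov : ∀ a ∈ B, a ∈ ({0,1} : Finset (Fin 12)) ∨ a ∈ ({2,3,4} : Finset (Fin 12)) ∨
      a ∈ ({5,6,7} : Finset (Fin 12)) ∨ a ∈ ({8,11} : Finset (Fin 12)) ∨
      a ∈ ({9,10} : Finset (Fin 12)) := by
    have H : ∀ b : Fin 12, b ∈ ({0,1} : Finset (Fin 12)) ∨ b ∈ ({2,3,4} : Finset (Fin 12)) ∨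
        b ∈ ({5,6,7} : Finset (Fin 12)) ∨ b ∈ ({8,11} : Finset (Fin 12)) ∨
        b ∈ ({9,10} : Finset (Fin 12)) := by decide
    exact fun a _ => H a
  have hb := cover_bound B _ _ _ _ _ hcov
  have c1 := inter_clique_le_one B {0,1} hB (by decide)
  have c2 := inter_clique_le_one B {2,3,4} hB (by decide)
  have c3 := inter_clique_le_one B {5,6,7} hB (by decide)
  have c4 := inter_clique_le_one B {8,11} hB (by decide)
  have c5 := inter_clique_le_one B {9,10} hB (by decide)
  omega

lemma gadget_le_4_uv (h0 : (0 : Fin 12) ∉ B) (h1 : (1 : Fin 12) ∉ B) : B.card ≤ 4 := by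
  have hcov : ∀ a ∈ B, a ∈ (∅ : Finset (Fin 12)) ∨ a ∈ ({2,3,4} : Finset (Fin 12)) ∨
      a ∈ ({5,6,7} : Finset (Fin 12)) ∨ a ∈ ({8,11} : Finset (Fin 12)) ∨
      a ∈ ({9,10} : Finset (Fin 12)) := by
    intro a ha
    have H : ∀ b : Fin 12, b ≠ 0 → b ≠ 1 → b ∈ (∅ : Finset (Fin 12)) ∨
        b ∈ ({2,3,4} : Finset (Fin 12)) ∨ b ∈ ({5,6,7} : Finset (Fin 12)) ∨
        b ∈ ({8,11} : Finset (Fin 12)) ∨ b ∈ ({9,10} : Finset (Fin 12)) := by decide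
    exact H a (fun h => h0 (h ▸ ha)) (fun h => h1 (h ▸ ha))
  have hb := cover_bound B _ _ _ _ _ hcov
  have c2 := inter_clique_le_one B {2,3,4} hB (by decide)
  have c3 := inter_clique_le_one B {5,6,7} hB (by decide)
  have c4 := inter_clique_le_one B {8,11} hB (by decide)
  have c5 := inter_clique_le_one B {9,10} hB (by decide)
  have c1 : (B ∩ (∅ : Finset (Fin 12))).card = 0 := by simp
  omega

lemma gadget_le_4_xy (h8 : (8 : Fin 12) ∉ B) (h10 : (10 : Fin 12) ∉ B) : B.card ≤ 4 := by
  have hcov : ∀ a ∈ B, a ∈ (∅ : Finset (Fin 12)) ∨ a ∈ ({0,1} : Finset (Fin 12)) ∨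
      a ∈ ({2,3,4} : Finset (Fin 12)) ∨ a ∈ ({5,6,7} : Finset (Fin 12)) ∨
      a ∈ ({9,11} : Finset (Fin 12)) := by
    intro a ha
    have H : ∀ b : Fin 12, b ≠ 8 → b ≠ 10 → b ∈ (∅ : Finset (Fin 12)) ∨
        b ∈ ({0,1} : Finset (Fin 12)) ∨ b ∈ ({2,3,4} : Finset (Fin 12)) ∨
        b ∈ ({5,6,7} : Finset (Fin 12)) ∨ b ∈ ({9,11} : Finset (Fin 12)) := by decide
    exact H a (fun h => h8 (h ▸ ha)) (fun h => h10 (h ▸ ha))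
  have hb := cover_bound B _ _ _ _ _ hcov
  have c2 := inter_clique_le_one B {0,1} hB (by decide)
  have c3 := inter_clique_le_one B {2,3,4} hB (by decide)
  have c4 := inter_clique_le_one B {5,6,7} hB (by decide)
  have c5 := inter_clique_le_one B {9,11} hB (by decide)
  have c1 : (B ∩ (∅ : Finset (Fin 12))).card = 0 := by simp
  omega

lemma gadget_le_3 (h0 : (0 : Fin 12) ∉ B) (h1 : (1 : Fin 12) ∉ B)
    (h8 : (8 : Fin 12) ∉ B) (h10 : (10 : Fin 12) ∉ B) : B.card ≤ 3 := by
  have hcov : ∀ a ∈ B, a ∈ (∅ : Finset (Fin 12)) ∨ a ∈ (∅ : Finset (Fin 12)) ∨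
      a ∈ ({2,3,4} : Finset (Fin 12)) ∨ a ∈ ({5,6,7} : Finset (Fin 12)) ∨
      a ∈ ({9,11} : Finset (Fin 12)) := by
    intro a ha
    have H : ∀ b : Fin 12, b ≠ 0 → b ≠ 1 → b ≠ 8 → b ≠ 10 → b ∈ (∅ : Finset (Fin 12)) ∨
        b ∈ (∅ : Finset (Fin 12)) ∨ b ∈ ({2,3,4} : Finset (Fin 12)) ∨
        b ∈ ({5,6,7} : Finset (Fin 12)) ∨ b ∈ ({9,11} : Finset (Fin 12)) := by decide
    exact H a (fun h => h0 (h ▸ ha)) (fun h => h1 (h ▸ ha))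
      (fun h => h8 (h ▸ ha)) (fun h => h10 (h ▸ ha))
  have hb := cover_bound B _ _ _ _ _ hcov
  have c3 := inter_clique_le_one B {2,3,4} hB (by decide)
  have c4 := inter_clique_le_one B {5,6,7} hB (by decide)
  have c5 := inter_clique_le_one B {9,11} hB (by decide)
  have c1 : (B ∩ (∅ : Finset (Fin 12))).card = 0 := by simp
  omega

end bounds

end MisAux

set_option maxHeartbeats 2000000
open MisAux

/-- Lemma 3: replacing the two edges `(u,v)` and `(x,y)` of a 2-connected cubic
(planar) graph `G` by the 12-vertex gadget of Fig. 3(a) — where moreover `u` is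
attached to `v'`, `v` to `u'`, `x` to `y'` and `y` to `x'` — increases the
independence number by exactly 5: `α(G') = α(G) + 5`. -/
theorem indepNum_mis_gadget {V : Type*} [Fintype V] [DecidableEq V]
    (G : SimpleGraph V) [DecidableRel G.Adj]
    (h2conn : G.TwoConnected) (hcubic : ∀ a : V, G.degree a = 3)
    (u v x y : V) (huv : G.Adj u v) (hxy : G.Adj x y)
    (hne : s(u, v) ≠ s(x, y))
    (G' : SimpleGraph (V ⊕ Fin 12))
    (hGG : ∀ s t : V, G'.Adj (inl s) (inl t) ↔
      G.Adj s t ∧ s(s, t) ≠ s(u, v) ∧ s(s, t) ≠ s(x, y))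
    (hcross : ∀ s : V, ∀ i : Fin 12, G'.Adj (inl s) (inr i) ↔
      ((s = u ∧ i = 1) ∨ (s = v ∧ i = 0) ∨ (s = x ∧ i = 10) ∨ (s = y ∧ i = 8)))
    (hgad : ∀ i j : Fin 12, G'.Adj (inr i) (inr j) ↔ misGadgetAdj i j ∨ misGadgetAdj j i) :
    G'.indepNum' = G.indepNum' + 5 := by
  refine le_antisymm ?upper ?lower
  case upper =>
    obtain ⟨s', hs', hc'⟩ := exists_indepNum G'
    rw [← hc']
    set A : Finset V := Finset.univ.filter (fun a : V => inl a ∈ s') with hAdef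
    set B : Finset (Fin 12) := Finset.univ.filter (fun i : Fin 12 => inr i ∈ s') with hBdef
    have hmemA : ∀ a : V, a ∈ A ↔ inl a ∈ s' := by intro a; simp [hAdef]
    have hmemB : ∀ i : Fin 12, i ∈ B ↔ inr i ∈ s' := by intro i; simp [hBdef]
    -- split the cardinality
    have hsplit : s' = A.image inl ∪ B.image inr := by
      ext z
      cases z with
      | inl a => simp [hAdef, hBdef]
      | inr i => simp [hAdef, hBdef]
    have hdisj : Disjoint (A.image inl) (B.image (inr : Fin 12 → V ⊕ Fin 12)) := by
      rw [Finset.disjoint_left]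
      rintro z hz hz'
      rw [Finset.mem_image] at hz hz'
      obtain ⟨a, -, rfl⟩ := hz
      obtain ⟨i, -, h⟩ := hz'
      cases h
    have hcard : s'.card = A.card + B.card := by
      rw [hsplit, Finset.card_union_of_disjoint hdisj,
        Finset.card_image_of_injective _ Sum.inl_injective,
        Finset.card_image_of_injective _ Sum.inr_injective]
    -- B is gadget-independent
    have hBind : ∀ i ∈ B, ∀ j ∈ B, i ≠ j → ¬ mA i j := by
      intro i hi j hj hij hadj
      have : ¬ G'.Adj (inr i) (inr j) :=
        hs' (Finset.mem_coe.mpr ((hmemB i).mp hi)) (Finset.mem_coe.mpr ((hmemB j).mp hj))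
          (fun h => hij (Sum.inr_injective h))
      exact this ((hgad i j).mpr hadj)
    -- exclusions in B coming from A
    have hexcl : ∀ a : V, a ∈ A → ∀ i : Fin 12, G'.Adj (inl a) (inr i) → i ∉ B := by
      intro a ha i hadj hi
      exact hs' (Finset.mem_coe.mpr ((hmemA a).mp ha)) (Finset.mem_coe.mpr ((hmemB i).mp hi))
        (fun h => by cases h) hadj
    -- the V-part minus removed vertices is independent in G
    have hAind : ∀ R : Finset V, ((u ∈ A ∧ v ∈ A) → v ∈ R) → ((x ∈ A ∧ y ∈ A) → y ∈ R) →
        G.IsIndepVertexSet ↑(A \ R) := by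
      intro R h1 h2 a ha b hb hab hadj
      rw [Finset.mem_coe, Finset.mem_sdiff] at ha hb
      have hnadj : ¬ G'.Adj (inl a) (inl b) :=
        hs' (Finset.mem_coe.mpr ((hmemA a).mp ha.1)) (Finset.mem_coe.mpr ((hmemA b).mp hb.1))
          (fun h => hab (Sum.inl_injective h))
      rw [hGG] at hnadj
      have hor : s(a, b) = s(u, v) ∨ s(a, b) = s(x, y) := by
        by_contra hc
        push_neg at hc
        exact hnadj ⟨hadj, hc.1, hc.2⟩
      rcases hor with h | h
      · rw [Sym2.eq_iff] at h
        rcases h with ⟨rfl, rfl⟩ | ⟨rfl, rfl⟩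
        · exact hb.2 (h1 ⟨ha.1, hb.1⟩)
        · exact ha.2 (h1 ⟨hb.1, ha.1⟩)
      · rw [Sym2.eq_iff] at h
        rcases h with ⟨rfl, rfl⟩ | ⟨rfl, rfl⟩
        · exact hb.2 (h2 ⟨ha.1, hb.1⟩)
        · exact ha.2 (h2 ⟨hb.1, ha.1⟩)
    have hAcard : ∀ R : Finset V, ((u ∈ A ∧ v ∈ A) → v ∈ R) → ((x ∈ A ∧ y ∈ A) → y ∈ R) →
        A.card ≤ G.indepNum' + R.card := by
      intro R h1 h2
      have h3 : (A \ R).card ≤ G.indepNum' := card_le_indepNum G (hAind R h1 h2)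
      have h4 : A.card - R.card ≤ (A \ R).card := Finset.le_card_sdiff R A
      omega
    by_cases huvA : u ∈ A ∧ v ∈ A <;> by_cases hxyA : x ∈ A ∧ y ∈ A
    · -- both pairs in A
      have h1 : (1 : Fin 12) ∉ B := hexcl u huvA.1 1 ((hcross u 1).mpr (by tauto))
      have h0 : (0 : Fin 12) ∉ B := hexcl v huvA.2 0 ((hcross v 0).mpr (by tauto))
      have h10 : (10 : Fin 12) ∉ B := hexcl x hxyA.1 10 ((hcross x 10).mpr (by tauto))
      have h8 : (8 : Fin 12) ∉ B := hexcl y hxyA.2 8 ((hcross y 8).mpr (by tauto))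
      have hBle := gadget_le_3 B hBind h0 h1 h8 h10
      have hAle := hAcard {v, y} (fun _ => by simp) (fun _ => by simp)
      have hRcard : ({v, y} : Finset V).card ≤ 2 := Finset.card_insert_le _ _ |>.trans (by simp)
      omega
    · have h1 : (1 : Fin 12) ∉ B := hexcl u huvA.1 1 ((hcross u 1).mpr (by tauto))
      have h0 : (0 : Fin 12) ∉ B := hexcl v huvA.2 0 ((hcross v 0).mpr (by tauto))
      have hBle := gadget_le_4_uv B hBind h0 h1
      have hAle := hAcard {v} (fun _ => by simp) (fun h => absurd h hxyA)
      have hRcard : ({v} : Finset V).card = 1 := Finset.card_singleton v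
      omega
    · have h10 : (10 : Fin 12) ∉ B := hexcl x hxyA.1 10 ((hcross x 10).mpr (by tauto))
      have h8 : (8 : Fin 12) ∉ B := hexcl y hxyA.2 8 ((hcross y 8).mpr (by tauto))
      have hBle := gadget_le_4_xy B hBind h8 h10
      have hAle := hAcard {y} (fun h => absurd h huvA) (fun _ => by simp)
      have hRcard : ({y} : Finset V).card = 1 := Finset.card_singleton y
      omega
    · have hBle := gadget_le_5 B hBind
      have hAle := hAcard ∅ (fun h => absurd h huvA) (fun h => absurd h hxyA)
      have hRcard : (∅ : Finset V).card = 0 := rfl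
      omega
  case lower =>
    obtain ⟨s, hs, hc⟩ := exists_indepNum G
    rw [← hc]
    have key : ∀ T : Finset (Fin 12), T.card = 5 →
        (∀ i ∈ T, ∀ j ∈ T, i ≠ j → ¬ mA i j) →
        ((1 : Fin 12) ∈ T → u ∉ s) → ((0 : Fin 12) ∈ T → v ∉ s) →
        ((10 : Fin 12) ∈ T → x ∉ s) → ((8 : Fin 12) ∈ T → y ∉ s) →
        s.card + 5 ≤ G'.indepNum' := by
      intro T hT5 hTind ht1 ht0 ht10 ht8
      set s₂ : Finset (V ⊕ Fin 12) := s.image inl ∪ T.image inr with hs₂def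
      have hdisj : Disjoint (s.image inl) (T.image (inr : Fin 12 → V ⊕ Fin 12)) := by
        rw [Finset.disjoint_left]
        rintro z hz hz'
        rw [Finset.mem_image] at hz hz'
        obtain ⟨a, -, rfl⟩ := hz
        obtain ⟨i, -, h⟩ := hz'
        cases h
      have hcard2 : s₂.card = s.card + 5 := by
        rw [hs₂def, Finset.card_union_of_disjoint hdisj,
          Finset.card_image_of_injective _ Sum.inl_injective,
          Finset.card_image_of_injective _ Sum.inr_injective, hT5]
      have hmem : ∀ z : V ⊕ Fin 12, z ∈ s₂ ↔
          (∃ a ∈ s, inl a = z) ∨ (∃ i ∈ T, inr i = z) := by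
        intro z; simp [hs₂def]
      have hcrosscase : ∀ a : V, a ∈ s → ∀ i : Fin 12, i ∈ T →
          ¬ G'.Adj (inl a) (inr i) := by
        intro a ha i hi hadj
        rcases (hcross a i).mp hadj with ⟨rfl, rfl⟩ | ⟨rfl, rfl⟩ | ⟨rfl, rfl⟩ | ⟨rfl, rfl⟩
        · exact ht1 hi ha
        · exact ht0 hi ha
        · exact ht10 hi ha
        · exact ht8 hi ha
      have hind2 : G'.IsIndepVertexSet ↑s₂ := by
        intro p hp q hq hpq hadj
        rw [Finset.mem_coe, hmem] at hp hq
        rcases hp with ⟨a, ha, rfl⟩ | ⟨i, hi, rfl⟩ <;>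
          rcases hq with ⟨b, hb, rfl⟩ | ⟨j, hj, rfl⟩
        · have hab : a ≠ b := fun h => hpq (h ▸ rfl)
          have := ((hGG a b).mp hadj).1
          exact hs (Finset.mem_coe.mpr ha) (Finset.mem_coe.mpr hb) hab this
        · exact hcrosscase a ha j hj hadj
        · exact hcrosscase b hb i hi hadj.symm
        · have hij : i ≠ j := fun h => hpq (h ▸ rfl)
          exact hTind i hi j hj hij ((hgad i j).mp hadj)
      calc s.card + 5 = s₂.card := hcard2.symm
        _ ≤ G'.indepNum' := card_le_indepNum G' hind2
    have hvu : v ∉ s ∨ u ∉ s := by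
      by_contra hcon
      push_neg at hcon
      exact hs (Finset.mem_coe.mpr hcon.2) (Finset.mem_coe.mpr hcon.1) huv.ne huv
    have hyx : y ∉ s ∨ x ∉ s := by
      by_contra hcon
      push_neg at hcon
      exact hs (Finset.mem_coe.mpr hcon.2) (Finset.mem_coe.mpr hcon.1) hxy.ne hxy
    by_cases hu : u ∈ s <;> by_cases hx : x ∈ s
    · have hv : v ∉ s := hvu.resolve_right (fun h => h hu)
      have hy : y ∉ s := hyx.resolve_right (fun h => h hx)
      exact key {0, 3, 6, 8, 9} (by decide) (by decide)
        (fun h => absurd h (by decide)) (fun _ => hv)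
        (fun h => absurd h (by decide)) (fun _ => hy)
    · have hv : v ∉ s := hvu.resolve_right (fun h => h hu)
      exact key {0, 2, 7, 10, 11} (by decide) (by decide)
        (fun h => absurd h (by decide)) (fun _ => hv)
        (fun _ => hx) (fun h => absurd h (by decide))
    · have hy : y ∉ s := hyx.resolve_right (fun h => h hx)
      exact key {1, 3, 5, 8, 9} (by decide) (by decide)
        (fun _ => hu) (fun h => absurd h (by decide))
        (fun h => absurd h (by decide)) (fun _ => hy)
    · exact key {1, 4, 5, 10, 11} (by decide) (by decide)
        (fun _ => hu) (fun h => absurd h (by decide))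
        (fun _ => hx) (fun h => absurd h (by decide))
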